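/- The category algebra 𝒦, the quotient of the σ-algebra of Borel subsets of the Cantor set 2^ω by the ideal of meager Borel sets, can be embedded into P(ℕ)/fin. -/

import Mathlib

open Set MeasureTheory
open scoped ENNReal

namespace Paper

/-- `X` and `Y` agree modulo a finite set. -/
def AlmostEq {α : Type} (X Y : Set α) : Prop := (symmDiff X Y).Finite

/-- the "equal mod finite" setoid on `Set α` -/
def finSetoid (α : Type) : Setoid (Set α) where
  r X Y := (symmDiff X Y).Finite
  iseqv := by
    constructor
    · intro X; simp
    · intro X Y h; rwa [symmDiff_comm]
    · intro X Y Z h1 h2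
      exact (h1.union h2).subset (symmDiff_triangle X Y Z)

/-- the quotient Boolean algebra `P(α)/fin` -/
def PFin (α : Type) : Type := Quotient (finSetoid α)

/-- the class of `X` in `P(α)/fin` -/
def PFin.mk {α : Type} (X : Set α) : PFin α := Quotient.mk (finSetoid α) X

/-- join in `P(α)/fin` -/
def PFin.sup {α : Type} : PFin α → PFin α → PFin α :=
  Quotient.lift₂ (fun X Y => PFin.mk (X ∪ Y))
    (by
      intro X Y X' Y' hX hY
      refine Quotient.sound ?_
      have hX' : (symmDiff X X').Finite := hX
      have hY' : (symmDiff Y Y').Finite := hY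
      show (symmDiff (X ∪ Y) (X' ∪ Y')).Finite
      refine (hX'.union hY').subset ?_
      intro x hx
      simp only [Set.mem_symmDiff, Set.mem_union] at hx ⊢
      tauto)

/-- meet in `P(α)/fin` -/
def PFin.inf {α : Type} : PFin α → PFin α → PFin α :=
  Quotient.lift₂ (fun X Y => PFin.mk (X ∩ Y))
    (by
      intro X Y X' Y' hX hY
      refine Quotient.sound ?_
      have hX' : (symmDiff X X').Finite := hX
      have hY' : (symmDiff Y Y').Finite := hY
      show (symmDiff (X ∩ Y) (X' ∩ Y')).Finite
      refine (hX'.union hY').subset ?_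
      intro x hx
      simp only [Set.mem_symmDiff, Set.mem_inter_iff, Set.mem_union] at hx ⊢
      tauto)

/-- complement in `P(α)/fin` -/
def PFin.compl {α : Type} : PFin α → PFin α :=
  Quotient.lift (fun X => PFin.mk Xᶜ)
    (by
      intro X Y h
      refine Quotient.sound ?_
      have h' : (symmDiff X Y).Finite := h
      show (symmDiff Xᶜ Yᶜ).Finite
      have e : symmDiff Xᶜ Yᶜ = symmDiff X Y := by
        ext x; simp only [Set.mem_symmDiff, Set.mem_compl_iff]; tauto
      rw [e]; exact h')

/-- bottom of `P(α)/fin` -/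
def PFin.bot {α : Type} : PFin α := PFin.mk (∅ : Set α)

/-- top of `P(α)/fin` -/
def PFin.top {α : Type} : PFin α := PFin.mk (Set.univ : Set α)

/-- the Cantor set `2^ω` -/
abbrev Cant : Type := ℕ → Bool

/-- Borel subsets of the Cantor set -/
abbrev KSet : Type := {A : Set Cant // MeasurableSet A}

lemma isMeagre_union {s t : Set Cant} (hs : IsMeagre s) (ht : IsMeagre t) :
    IsMeagre (s ∪ t) := by
  rw [IsMeagre, Set.compl_union]
  exact Filter.inter_mem hs ht

/-- the "equal modulo a meager set" setoid on Borel subsets of `2^ω` -/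
def meagSetoid : Setoid KSet where
  r A B := IsMeagre (symmDiff (A : Set Cant) (B : Set Cant))
  iseqv := by
    constructor
    · intro A
      simp only [symmDiff_self, Set.bot_eq_empty]
      exact IsMeagre.empty
    · intro A B h; rwa [symmDiff_comm]
    · intro A B C h1 h2
      exact (isMeagre_union h1 h2).mono
        (symmDiff_triangle (A : Set Cant) (B : Set Cant) (C : Set Cant))

/-- the category algebra `𝒦 = Bor(2^ω)/Meager` -/
def KAlg : Type := Quotient meagSetoid

/-- the class of a Borel set in the category algebra -/
def KAlg.mk (A : KSet) : KAlg := Quotient.mk meagSetoid A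

/-- join in the category algebra -/
def KAlg.sup : KAlg → KAlg → KAlg :=
  Quotient.lift₂ (fun A B : KSet => KAlg.mk ⟨(A : Set Cant) ∪ (B : Set Cant), A.2.union B.2⟩)
    (by
      intro A B A' B' hA hB
      refine Quotient.sound ?_
      have hA' : IsMeagre (symmDiff (A : Set Cant) (A' : Set Cant)) := hA
      have hB' : IsMeagre (symmDiff (B : Set Cant) (B' : Set Cant)) := hB
      show IsMeagre (symmDiff ((A : Set Cant) ∪ (B : Set Cant)) ((A' : Set Cant) ∪ (B' : Set Cant)))
      refine (isMeagre_union hA' hB').mono ?_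
      intro x hx
      simp only [Set.mem_symmDiff, Set.mem_union] at hx ⊢
      tauto)

/-- meet in the category algebra -/
def KAlg.inf : KAlg → KAlg → KAlg :=
  Quotient.lift₂ (fun A B : KSet => KAlg.mk ⟨(A : Set Cant) ∩ (B : Set Cant), A.2.inter B.2⟩)
    (by
      intro A B A' B' hA hB
      refine Quotient.sound ?_
      have hA' : IsMeagre (symmDiff (A : Set Cant) (A' : Set Cant)) := hA
      have hB' : IsMeagre (symmDiff (B : Set Cant) (B' : Set Cant)) := hB
      show IsMeagre (symmDiff ((A : Set Cant) ∩ (B : Set Cant)) ((A' : Set Cant) ∩ (B' : Set Cant)))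
      refine (isMeagre_union hA' hB').mono ?_
      intro x hx
      simp only [Set.mem_symmDiff, Set.mem_inter_iff, Set.mem_union] at hx ⊢
      tauto)

/-- complement in the category algebra -/
def KAlg.compl : KAlg → KAlg :=
  Quotient.lift (fun A : KSet => KAlg.mk ⟨(A : Set Cant)ᶜ, A.2.compl⟩)
    (by
      intro A B h
      refine Quotient.sound ?_
      have h' : IsMeagre (symmDiff (A : Set Cant) (B : Set Cant)) := h
      show IsMeagre (symmDiff (A : Set Cant)ᶜ (B : Set Cant)ᶜ)
      have e : symmDiff (A : Set Cant)ᶜ (B : Set Cant)ᶜ = symmDiff (A : Set Cant) (B : Set Cant) := by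
        ext x; simp only [Set.mem_symmDiff, Set.mem_compl_iff]; tauto
      rw [e]; exact h')

/-- bottom of the category algebra -/
def KAlg.bot : KAlg := KAlg.mk ⟨∅, MeasurableSet.empty⟩

/-- top of the category algebra -/
def KAlg.top : KAlg := KAlg.mk ⟨Set.univ, MeasurableSet.univ⟩

/-- `φ : 𝒦 → P(ℕ)/fin` is a Boolean-algebra embedding -/
structure IsEmbeddingK (φ : KAlg → PFin ℕ) : Prop where
  injective : Function.Injective φ
  map_sup : ∀ a b, φ (KAlg.sup a b) = PFin.sup (φ a) (φ b)
  map_inf : ∀ a b, φ (KAlg.inf a b) = PFin.inf (φ a) (φ b)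
  map_compl : ∀ a, φ (KAlg.compl a) = PFin.compl (φ a)
  map_bot : φ KAlg.bot = PFin.bot
  map_top : φ KAlg.top = PFin.top

section Aux
open Filter

def cyl (s : List Bool) : Set Cant := {x | ∀ i < s.length, x i = s.getD i false}

lemma isOpen_cyl (s : List Bool) : IsOpen (cyl s) := by
  have h : cyl s = ⋂ i ∈ Finset.range s.length, (fun x : Cant => x i) ⁻¹' {s.getD i false} := by
    ext x; simp [cyl]
  rw [h]
  exact isOpen_biInter_finset fun i _ =>
    (continuous_apply i).isOpen_preimage _ (isOpen_discrete _)

lemma mem_cyl_self (s : List Bool) : (fun i => s.getD i false) ∈ cyl s := fun i _ => rfl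

lemma neBot_res (s : List Bool) : (residual Cant ⊓ 𝓟 (cyl s)).NeBot := by
  rw [Filter.inf_principal_neBot_iff]
  intro U hU
  have h := (dense_of_mem_residual hU).inter_open_nonempty _ (isOpen_cyl s)
    ⟨_, mem_cyl_self s⟩
  exact h.imp fun x hx => ⟨hx.2, hx.1⟩

noncomputable def qUlt (s : List Bool) : Ultrafilter Cant :=
  haveI := neBot_res s
  Ultrafilter.of (residual Cant ⊓ 𝓟 (cyl s))

lemma qUlt_le (s : List Bool) : (qUlt s : Filter Cant) ≤ residual Cant ⊓ 𝓟 (cyl s) := by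
  haveI := neBot_res s
  exact Ultrafilter.of_le _

lemma residual_mem_qUlt (s : List Bool) {R : Set Cant} (h : R ∈ residual Cant) :
    R ∈ qUlt s := qUlt_le s (Filter.mem_inf_of_left h)

lemma cyl_mem_qUlt (s : List Bool) : cyl s ∈ qUlt s :=
  qUlt_le s (Filter.mem_inf_of_right (Filter.mem_principal_self _))

lemma mem_qUlt_of (s : List Bool) {C : Set Cant} (h : IsMeagre (cyl s \ C)) :
    C ∈ qUlt s := by
  have h1 : (cyl s \ C)ᶜ ∈ qUlt s := residual_mem_qUlt s h
  have h2 : cyl s ∈ qUlt s := cyl_mem_qUlt s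
  refine Filter.mem_of_superset (Filter.inter_mem h1 h2) ?_
  intro x hx
  by_contra hc
  exact hx.1 ⟨hx.2, hc⟩

lemma symmDiff_mem_qUlt (q : Ultrafilter Cant) (A B : Set Cant) :
    symmDiff A B ∈ q ↔ ¬((A ∈ q) ↔ (B ∈ q)) := by
  have hinter : ∀ S T : Set Cant, S ∩ T ∈ q ↔ S ∈ q ∧ T ∈ q := fun S T =>
    Filter.inter_mem_iff
  simp only [Set.symmDiff_def, Set.sup_eq_union, Ultrafilter.union_mem_iff, Set.diff_eq,
    hinter, Ultrafilter.compl_mem_iff_notMem]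
  tauto

lemma mem_qUlt_congr {A B : Set Cant} (h : IsMeagre (symmDiff A B)) (t : List Bool) :
    A ∈ qUlt t ↔ B ∈ qUlt t := by
  by_contra hc
  exact Ultrafilter.compl_notMem_iff.mpr ((symmDiff_mem_qUlt (qUlt t) A B).mpr hc)
    (residual_mem_qUlt t h)

lemma infinite_mem_qUlt {C : Set Cant} (hC : MeasurableSet C) (h : ¬ IsMeagre C) :
    {t : List Bool | C ∈ qUlt t}.Infinite := by
  obtain ⟨U, hUo, hUe⟩ := hC.residualEq_isOpen
  have hM : IsMeagre (U \ C) := by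
    rw [IsMeagre]
    refine Filter.mem_of_superset hUe ?_
    intro x hx
    simp only [Set.mem_compl_iff, Set.mem_diff, not_and, not_not]
    intro hxU
    exact Eq.mp (id hx).symm hxU
  have hUne : U.Nonempty := by
    rcases U.eq_empty_or_nonempty with h0 | h1
    · exfalso
      apply h
      rw [IsMeagre]
      refine Filter.mem_of_superset hUe ?_
      intro x hx
      simp only [Set.mem_compl_iff]
      intro hxC
      rw [h0] at hx
      exact absurd (Eq.mp (id hx) hxC) (Set.notMem_empty x)
    · exact h1
  obtain ⟨x, hx⟩ := hUne
  obtain ⟨I, u, hu, hsub⟩ := isOpen_pi_iff.mp hUo x hx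
  set n := (I.sup id) + 1 with hn
  set s0 : List Bool := List.ofFn (fun j : Fin n => x j) with hs0
  have hlen : s0.length = n := List.length_ofFn
  have hgetD : ∀ i < n, s0.getD i false = x i := by
    intro i hi
    have h1 : i < s0.length := by rw [hlen]; exact hi
    rw [List.getD_eq_getElem _ _ h1]
    exact List.getElem_ofFn _
  have hcylsub : cyl s0 ⊆ U := by
    intro y hy
    apply hsub
    intro i hi
    have hin : i < n := lt_of_le_of_lt (Finset.le_sup (f := id) hi) (Nat.lt_succ_self _)
    have hyi : y i = x i := by
      have := hy i (by rw [hlen]; exact hin)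
      rwa [hgetD i hin] at this
    rw [hyi]; exact (hu i hi).2
  have key : ∀ k : ℕ, C ∈ qUlt (s0 ++ List.replicate k false) := by
    intro k
    apply mem_qUlt_of
    refine hM.mono ?_
    intro y hy
    refine ⟨hcylsub ?_, hy.2⟩
    intro i hi
    have := hy.1 i (by simp; omega)
    rwa [List.getD_append _ _ _ _ hi] at this
  have hinj : Function.Injective (fun k : ℕ => s0 ++ List.replicate k false) := by
    intro a b hab
    have := congrArg List.length hab
    simpa using this
  exact Set.infinite_of_injective_forall_mem hinj key

end Aux

/-- the category algebra `𝒦 = Bor(2^ω)/Meager` embeds into `P(ℕ)/fin`. -/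
theorem category_algebra_embeds :
    ∃ φ : KAlg → PFin ℕ, IsEmbeddingK φ := by
  obtain ⟨e, he⟩ := exists_surjective_nat (List Bool)
  refine ⟨Quotient.lift (fun A : KSet => PFin.mk {n : ℕ | (A : Set Cant) ∈ qUlt (e n)}) ?_, ?_⟩
  · intro A B h
    have hAB : ∀ t, ((A : Set Cant) ∈ qUlt t ↔ (B : Set Cant) ∈ qUlt t) :=
      mem_qUlt_congr h
    have hset : {n : ℕ | (A : Set Cant) ∈ qUlt (e n)} = {n : ℕ | (B : Set Cant) ∈ qUlt (e n)} := by
      ext n; exact hAB (e n)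
    show PFin.mk _ = PFin.mk _
    exact congrArg PFin.mk hset
  · constructor
    · -- injective
      intro a b
      refine Quotient.inductionOn₂ a b ?_
      intro A B h
      have hfin : (symmDiff {n : ℕ | (A : Set Cant) ∈ qUlt (e n)}
          {n : ℕ | (B : Set Cant) ∈ qUlt (e n)}).Finite := Quotient.exact h
      refine Quotient.sound ?_
      show IsMeagre (symmDiff (A : Set Cant) (B : Set Cant))
      by_contra hnm
      have hinf := infinite_mem_qUlt (A.2.symmDiff B.2) hnm
      have hset : symmDiff {n : ℕ | (A : Set Cant) ∈ qUlt (e n)}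
          {n : ℕ | (B : Set Cant) ∈ qUlt (e n)}
          = {n : ℕ | symmDiff (A : Set Cant) (B : Set Cant) ∈ qUlt (e n)} := by
        ext n
        simp only [Set.mem_symmDiff, Set.mem_setOf_eq,
          symmDiff_mem_qUlt (qUlt (e n)) (A : Set Cant) (B : Set Cant)]
        tauto
      rw [hset] at hfin
      apply hinf
      have hsub : {t : List Bool | symmDiff (A : Set Cant) (B : Set Cant) ∈ qUlt t}
          ⊆ e '' {n : ℕ | symmDiff (A : Set Cant) (B : Set Cant) ∈ qUlt (e n)} := by
        intro t ht
        obtain ⟨n, rfl⟩ := he t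
        exact ⟨n, ht, rfl⟩
      exact (hfin.image e).subset hsub
    · -- map_sup
      intro a b
      refine Quotient.inductionOn₂ a b ?_
      intro A B
      show PFin.mk _ = PFin.mk _
      apply congrArg PFin.mk
      ext n
      exact Ultrafilter.union_mem_iff
    · -- map_inf
      intro a b
      refine Quotient.inductionOn₂ a b ?_
      intro A B
      show PFin.mk _ = PFin.mk _
      apply congrArg PFin.mk
      ext n
      exact Filter.inter_mem_iff
    · -- map_compl
      intro a
      refine Quotient.inductionOn a ?_
      intro A
      show PFin.mk _ = PFin.mk _
      apply congrArg PFin.mk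
      ext n
      exact Ultrafilter.compl_mem_iff_notMem
    · -- map_bot
      show PFin.mk _ = PFin.mk _
      apply congrArg PFin.mk
      ext n
      simp only [Set.mem_setOf_eq, Set.mem_empty_iff_false, iff_false]
      exact Filter.empty_notMem _
    · -- map_top
      show PFin.mk _ = PFin.mk _
      apply congrArg PFin.mk
      ext n
      simp only [Set.mem_setOf_eq, Set.mem_univ, iff_true]
      exact Filter.univ_mem


end Paper
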